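/- Let g ≥ 1 be an integer and let Z be a symmetric g×g complex matrix whose imaginary part Im Z is positive definite. Then for every z ∈ ℂ^g, the family of complex numbers n ↦ exp(πi·ᵗn·Z·n + 2πi·ᵗn·z), indexed by n ∈ ℤ^g, is summable (the defining series of the Riemann theta function converges absolutely). -/

import Mathlib

open scoped Real
open Matrix Complex Finset

/-- The general term of the defining series of the Riemann theta function. -/
noncomputable def riemannThetaTerm {g : ℕ} (Z : Matrix (Fin g) (Fin g) ℂ)
    (z : Fin g → ℂ) (n : Fin g → ℤ) : ℂ :=
  Complex.exp ((Real.pi : ℂ) * Complex.I * (∑ j, ∑ k, (n j : ℂ) * Z j k * (n k : ℂ)) +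
    2 * (Real.pi : ℂ) * Complex.I * (∑ j, (n j : ℂ) * z j))

/-- Quadratic forms scale quadratically. -/
private lemma quad_smul {g : ℕ} (Y : Matrix (Fin g) (Fin g) ℝ) (a : ℝ) (v : Fin g → ℝ) :
    (a • v) ⬝ᵥ Y.mulVec (a • v) = a ^ 2 * (v ⬝ᵥ Y.mulVec v) := by
  rw [Matrix.mulVec_smul, dotProduct_smul, smul_dotProduct]
  simp [smul_eq_mul]; ring

private lemma quad_continuous {g : ℕ} (Y : Matrix (Fin g) (Fin g) ℝ) :
    Continuous fun x : Fin g → ℝ => x ⬝ᵥ Y.mulVec x := by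
  simp only [dotProduct, Matrix.mulVec]
  exact continuous_finset_sum _ fun j _ =>
    (continuous_apply j).mul <| continuous_finset_sum _ fun k _ =>
      continuous_const.mul (continuous_apply k)

/-- A positive definite real matrix dominates a positive multiple of the standard
quadratic form. -/
private lemma posDef_lower_bound {g : ℕ} (hg : 1 ≤ g) {Y : Matrix (Fin g) (Fin g) ℝ}
    (hY : Y.PosDef) :
    ∃ c > (0 : ℝ), ∀ x : Fin g → ℝ, c * (∑ j, x j ^ 2) ≤ x ⬝ᵥ Y.mulVec x := by
  haveI : Nonempty (Fin g) := Fin.pos_iff_nonempty.mp hg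
  haveI : Nontrivial (Fin g → ℝ) := Function.nontrivial
  have hne : (Metric.sphere (0 : Fin g → ℝ) 1).Nonempty :=
    NormedSpace.sphere_nonempty.mpr zero_le_one
  obtain ⟨u, hu, hmin⟩ := (isCompact_sphere (0 : Fin g → ℝ) 1).exists_isMinOn hne
    (quad_continuous Y).continuousOn
  have hu1 : ‖u‖ = 1 := mem_sphere_zero_iff_norm.mp hu
  have hu0 : u ≠ 0 := by intro h; rw [h, norm_zero] at hu1; norm_num at hu1
  set c₀ : ℝ := u ⬝ᵥ Y.mulVec u with hc₀
  have hc₀pos : 0 < c₀ := by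
    have := hY.dotProduct_mulVec_pos hu0
    simpa [star_trivial] using this
  -- on the sup-norm sphere the form is at least `c₀`, hence `q x ≥ c₀ ‖x‖²`
  have key : ∀ x : Fin g → ℝ, c₀ * ‖x‖ ^ 2 ≤ x ⬝ᵥ Y.mulVec x := by
    intro x
    rcases eq_or_ne x 0 with rfl | hx
    · simp
    · have hxn : (0 : ℝ) < ‖x‖ := norm_pos_iff.mpr hx
      set v : Fin g → ℝ := ‖x‖⁻¹ • x with hv
      have hvs : v ∈ Metric.sphere (0 : Fin g → ℝ) 1 := by
        rw [mem_sphere_zero_iff_norm]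
        exact norm_smul_inv_norm hx
      have hle : c₀ ≤ v ⬝ᵥ Y.mulVec v := isMinOn_iff.mp hmin v hvs
      have hxv : x = ‖x‖ • v := by
        rw [hv, smul_smul, mul_inv_cancel₀ hxn.ne', one_smul]
      have hq2 := quad_smul Y ‖x‖ v
      rw [← hxv] at hq2
      calc c₀ * ‖x‖ ^ 2 ≤ (v ⬝ᵥ Y.mulVec v) * ‖x‖ ^ 2 :=
            mul_le_mul_of_nonneg_right hle (sq_nonneg _)
        _ = x ⬝ᵥ Y.mulVec x := by rw [hq2]; ring
  refine ⟨c₀ / g, div_pos hc₀pos (by exact_mod_cast hg), fun x => ?_⟩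
  have hsum : (∑ j, x j ^ 2) ≤ g * ‖x‖ ^ 2 := by
    calc (∑ j, x j ^ 2) ≤ ∑ _j : Fin g, ‖x‖ ^ 2 := by
          refine Finset.sum_le_sum fun j _ => ?_
          have := norm_le_pi_norm x j
          have h0 : (0 : ℝ) ≤ ‖x j‖ := norm_nonneg _
          calc x j ^ 2 = ‖x j‖ ^ 2 := by rw [Real.norm_eq_abs, _root_.sq_abs]
            _ ≤ ‖x‖ ^ 2 := by
                exact pow_le_pow_left₀ h0 this 2
      _ = g * ‖x‖ ^ 2 := by simp [Finset.sum_const, nsmul_eq_mul]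
  have hgpos : (0 : ℝ) < g := by exact_mod_cast hg
  have h1 : (c₀ / g) * (∑ j, x j ^ 2) ≤ (c₀ / g) * (g * ‖x‖ ^ 2) :=
    mul_le_mul_of_nonneg_left hsum (le_of_lt (div_pos hc₀pos hgpos))
  have h2 : (c₀ / g) * (g * ‖x‖ ^ 2) = c₀ * ‖x‖ ^ 2 := by
    field_simp
  exact h1.trans_eq h2 |>.trans (key x)

/-- Summability of a product of summable nonnegative families over a pi type. -/
private lemma summable_pi_prod : ∀ (g : ℕ) (f : Fin g → ℤ → ℝ),
    (∀ j k, 0 ≤ f j k) → (∀ j, Summable (f j)) →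
    Summable (fun n : Fin g → ℤ => ∏ j, f j (n j)) := by
  intro g
  induction g with
  | zero =>
    intro f _ _
    simp only [Finset.univ_eq_empty, Finset.prod_empty]
    exact summable_of_finite_support (Set.toFinite _)
  | succ m ih =>
    intro f h0 hf
    have hprod : Summable (fun p : ℤ × (Fin m → ℤ) =>
        f 0 p.1 * ∏ j : Fin m, f j.succ (p.2 j)) := by
      apply Summable.mul_of_nonneg (hf 0)
        (ih (fun j => f j.succ) (fun j k => h0 j.succ k) (fun j => hf j.succ))
      · exact fun k => h0 0 k
      · exact fun v => Finset.prod_nonneg fun j _ => h0 j.succ (v j)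
    have key : ∀ p : ℤ × (Fin m → ℤ),
        (∏ j, f j ((Fin.cons p.1 p.2 : Fin (m + 1) → ℤ) j)) = f 0 p.1 * ∏ j : Fin m, f j.succ (p.2 j) := by
      intro p
      rw [Fin.prod_univ_succ]
      simp [Fin.cons_succ]
    rw [← (Fin.consEquiv (fun _ : Fin (m + 1) => ℤ)).summable_iff]
    exact hprod.congr fun p => (key p).symm

private lemma im_term_eq {g : ℕ} (Z : Matrix (Fin g) (Fin g) ℂ) (n : Fin g → ℤ) :
    (∑ j, ∑ k, (n j : ℂ) * Z j k * (n k : ℂ)).im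
      = (fun j => (n j : ℝ)) ⬝ᵥ (Z.map Complex.im).mulVec (fun j => (n j : ℝ)) := by
  simp only [dotProduct, Matrix.mulVec, Matrix.map_apply, Complex.im_sum,
    Finset.mul_sum]
  refine Finset.sum_congr rfl fun j _ => Finset.sum_congr rfl fun k _ => ?_
  simp [Complex.mul_im, Complex.mul_re]
  ring

theorem riemannTheta_summable (g : ℕ) (hg : 1 ≤ g)
    (Z : Matrix (Fin g) (Fin g) ℂ) (hZsymm : Z.IsSymm)
    (hZim : (Z.map Complex.im).PosDef) (z : Fin g → ℂ) :
    Summable (fun n : Fin g → ℤ => riemannThetaTerm Z z n) := by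
  obtain ⟨c, hc, hq⟩ := posDef_lower_bound hg hZim
  set f : Fin g → ℤ → ℝ := fun j k =>
    Real.exp (-π * (c * (k : ℝ) ^ 2 - 2 * |(z j).im| * |(k : ℝ)|)) with hfdef
  have hfsummable : ∀ j, Summable (f j) := by
    intro j
    have := summable_pow_mul_jacobiTheta₂_term_bound |(z j).im| hc 0
    refine this.congr fun k => ?_
    simp [hfdef]
  have hbound : Summable (fun n : Fin g → ℤ => ∏ j, f j (n j)) :=
    summable_pi_prod g f (fun j k => Real.exp_nonneg _) hfsummable
  refine Summable.of_norm_bounded hbound fun n => ?_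
  rw [riemannThetaTerm, Complex.norm_exp]
  have hexp : (∏ j, f j (n j)) =
      Real.exp (∑ j, (-π * (c * ((n j : ℝ)) ^ 2 - 2 * |(z j).im| * |(n j : ℝ)|))) := by
    rw [Real.exp_sum]
  rw [hexp, Real.exp_le_exp]
  -- compute the real part
  set Q : ℂ := ∑ j, ∑ k, (n j : ℂ) * Z j k * (n k : ℂ) with hQ
  set L : ℂ := ∑ j, (n j : ℂ) * z j with hL
  have hre : ((π : ℂ) * Complex.I * Q + 2 * (π : ℂ) * Complex.I * L).re
      = -(π * Q.im) - 2 * π * L.im := by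
    simp [Complex.add_re, Complex.mul_re, Complex.mul_im]
    ring
  have hQim : Q.im = (fun j => (n j : ℝ)) ⬝ᵥ (Z.map Complex.im).mulVec (fun j => (n j : ℝ)) :=
    im_term_eq Z n
  have hLim : L.im = ∑ j, (n j : ℝ) * (z j).im := by
    simp [hL, Complex.im_sum, Complex.mul_im]
  have h1 : c * (∑ j, ((n j : ℝ)) ^ 2) ≤ Q.im := by
    rw [hQim]; exact hq _
  have h2 : -(∑ j, (n j : ℝ) * (z j).im) ≤ ∑ j, |(z j).im| * |(n j : ℝ)| := by
    calc -(∑ j, (n j : ℝ) * (z j).im) ≤ |∑ j, (n j : ℝ) * (z j).im| := neg_le_abs _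
      _ ≤ ∑ j, |(n j : ℝ) * (z j).im| := Finset.abs_sum_le_sum_abs _ _
      _ = ∑ j, |(z j).im| * |(n j : ℝ)| := by
          refine Finset.sum_congr rfl fun j _ => ?_
          rw [abs_mul]; ring
  have hrhs : (∑ j, (-π * (c * ((n j : ℝ)) ^ 2 - 2 * |(z j).im| * |(n j : ℝ)|)))
      = -π * (c * (∑ j, ((n j : ℝ)) ^ 2)) + 2 * π * (∑ j, |(z j).im| * |(n j : ℝ)|) := by
    calc (∑ j, (-π * (c * ((n j : ℝ)) ^ 2 - 2 * |(z j).im| * |(n j : ℝ)|)))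
        = ∑ j, ((-π * c) * ((n j : ℝ)) ^ 2 + (2 * π) * (|(z j).im| * |(n j : ℝ)|)) :=
          Finset.sum_congr rfl fun j _ => by ring
      _ = (-π * c) * (∑ j, ((n j : ℝ)) ^ 2) + (2 * π) * (∑ j, |(z j).im| * |(n j : ℝ)|) := by
          rw [Finset.sum_add_distrib, ← Finset.mul_sum, ← Finset.mul_sum]
      _ = -π * (c * (∑ j, ((n j : ℝ)) ^ 2)) + 2 * π * (∑ j, |(z j).im| * |(n j : ℝ)|) := by
          ring
  rw [hre, hrhs, hLim]
  have hp1 : π * (c * (∑ j, ((n j : ℝ)) ^ 2)) ≤ π * Q.im :=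
    mul_le_mul_of_nonneg_left h1 Real.pi_pos.le
  have hp2 : (2 * π) * (-(∑ j, (n j : ℝ) * (z j).im))
      ≤ (2 * π) * (∑ j, |(z j).im| * |(n j : ℝ)|) :=
    mul_le_mul_of_nonneg_left h2 (by positivity)
  linarith
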